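/- Let Γ be a connected multigraph, g an integer, and φ0 ∈ V(Γ) nondegenerate. Then the stability polytope of V(Γ) containing φ0 (the connected component of the complement of the union of the stability hyperplanes that contains φ0) is exactly the set {φ ∈ V(Γ) : ℓ(S,d)(φ) > 0 for every elementary S ⊊ V and every d ∈ ℤ such that ℓ(S,d)(φ0) > 0}. -/

import Mathlib

namespace ThetaPaper

/-- The adjacency relation within a vertex set `S`: `a` and `b` lie in `S`
and are joined by an edge of the multigraph with edge-endpoint map `ends`. -/
def AdjOn {V E : Type} (ends : E → Sym2 V) (S : Set V) (a b : V) : Prop :=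
  a ∈ S ∧ b ∈ S ∧ ∃ e, ends e = s(a, b)

/-- The induced subgraph on `S` is (nonempty and) connected. -/
def ConnectedOn {V E : Type} (ends : E → Sym2 V) (S : Set V) : Prop :=
  S.Nonempty ∧ ∀ a ∈ S, ∀ b ∈ S, Relation.ReflTransGen (AdjOn ends S) a b

/-- The multigraph is connected. -/
def GraphConnected {V E : Type} (ends : E → Sym2 V) : Prop :=
  ConnectedOn ends Set.univ

/-- A nonempty proper subset `S` of the vertices is elementary if both the induced
subgraph on `S` and the induced subgraph on its complement are connected. -/
def Elementary {V E : Type} (ends : E → Sym2 V) (S : Set V) : Prop :=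
  S.Nonempty ∧ Sᶜ.Nonempty ∧ ConnectedOn ends S ∧ ConnectedOn ends Sᶜ

/-- `cut S` is the number of edges with one endpoint in `S` and the other outside. -/
noncomputable def cut {V E : Type} (ends : E → Sym2 V) (S : Set V) : ℕ :=
  Nat.card {e : E // ∃ a b, ends e = s(a, b) ∧ a ∈ S ∧ b ∉ S}

/-- `ℓ(S,d)(φ) = d − Σ_{v∈S} φ(v) + cut(S)/2`. -/
noncomputable def ell {V E : Type} (ends : E → Sym2 V) (S : Set V) (d : ℤ) (φ : V → ℝ) : ℝ :=
  (d : ℝ) - (∑ᶠ v ∈ S, φ v) + (cut ends S : ℝ) / 2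

/-- `φ` is nondegenerate: it lies on no stability hyperplane. -/
def Nondegenerate {V E : Type} (ends : E → Sym2 V) (φ : V → ℝ) : Prop :=
  ∀ S : Set V, Elementary ends S → ∀ d : ℤ, ell ends S d φ ≠ 0

/-- The multigraph has loop-free circuit rank 0: after deleting all loops it is a tree
(connected, with number of edges = number of vertices − 1). -/
def RankZero {V E : Type} [Fintype V] (ends : E → Sym2 V) : Prop :=
  GraphConnected (fun e : {e : E // ¬ (ends e).IsDiag} => ends e.1) ∧
  Nat.card {e : E // ¬ (ends e).IsDiag} + 1 = Fintype.card V

/-- A sheaf model of degree `g−1`: a multidegree `dd` on the vertices together with a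
set `N` of nodes (where the corresponding sheaf fails to be locally free), with
`Σ dd + #N = g − 1`. -/
def IsSheafModel {V E : Type} [Fintype V] (dd : V → ℤ) (N : Set E) (g : ℤ) : Prop :=
  (∑ v, dd v) + (Nat.card N : ℤ) = g - 1

/-- The degree of the sheaf model `(dd, N)` on the subcurve with vertex set `S`:
`Σ_{v∈S} dd v` plus the number of edges of `N` with both endpoints in `S`. -/
noncomputable def degS {V E : Type} (ends : E → Sym2 V) (dd : V → ℤ) (N : Set E)
    (S : Set V) : ℤ :=
  (∑ᶠ v ∈ S, dd v) + (Nat.card {e : E // e ∈ N ∧ ∀ v ∈ ends e, v ∈ S} : ℤ)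

/-- `φ`-semistability of a sheaf model. -/
def Semistable {V E : Type} (ends : E → Sym2 V) (dd : V → ℤ) (N : Set E)
    (φ : V → ℝ) : Prop :=
  ∀ S : Set V, S.Nonempty → S ≠ Set.univ →
    (∑ᶠ v ∈ S, φ v) - (cut ends S : ℝ) / 2 ≤ (degS ends dd N S : ℝ)

/-- `φ`-stability of a sheaf model. -/
def Stable {V E : Type} (ends : E → Sym2 V) (dd : V → ℤ) (N : Set E)
    (φ : V → ℝ) : Prop :=
  ∀ S : Set V, S.Nonempty → S ≠ Set.univ →
    (∑ᶠ v ∈ S, φ v) - (cut ends S : ℝ) / 2 < (degS ends dd N S : ℝ)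

/-- The set of nondegenerate elements of the affine space `V(Γ)` (with the real
number `gr` playing the role of `g`). -/
def OmegaSet {V E : Type} [Fintype V] (ends : E → Sym2 V) (gr : ℝ) : Set (V → ℝ) :=
  {φ | (∑ v, φ v) = gr - 1 ∧ Nondegenerate ends φ}

/-- `P` is a stability polytope of `V(Γ)`: a connected component of the complement in
`V(Γ)` of the union of all stability hyperplanes. -/
def IsStabPolytope {V E : Type} [Fintype V] (ends : E → Sym2 V) (gr : ℝ)
    (P : Set (V → ℝ)) : Prop :=
  ∃ φ0 ∈ OmegaSet ends gr, P = connectedComponentIn (OmegaSet ends gr) φ0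


section Helpers

variable {V E : Type} [Fintype V]

lemma finsum_eq (S : Set V) (φ : V → ℝ) :
    ∑ᶠ v ∈ S, φ v = ∑ v ∈ S.toFinite.toFinset, φ v := by
  rw [← finsum_mem_coe_finset, Set.Finite.coe_toFinset]

lemma sum_compl (S : Set V) (φ : V → ℝ) :
    ∑ᶠ v ∈ Sᶜ, φ v = (∑ v, φ v) - ∑ᶠ v ∈ S, φ v := by
  classical
  rw [finsum_eq, finsum_eq]
  have h : (Sᶜ).toFinite.toFinset = (S.toFinite.toFinset)ᶜ := by
    ext v; simp [Set.mem_compl_iff, Set.mem_setOf_eq]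
  rw [h, eq_sub_iff_add_eq]
  exact Finset.sum_compl_add_sum _ _

omit [Fintype V] in
lemma cut_compl (ends : E → Sym2 V) (S : Set V) : cut ends Sᶜ = cut ends S := by
  apply Nat.card_congr
  apply Equiv.subtypeEquivRight
  intro e
  constructor
  · rintro ⟨a, b, h, ha, hb⟩
    exact ⟨b, a, by rw [h]; exact Sym2.eq_swap, by simpa using hb, by simpa using ha⟩
  · rintro ⟨a, b, h, ha, hb⟩
    exact ⟨b, a, by rw [h]; exact Sym2.eq_swap, by simpa using hb, by simpa using ha⟩

omit [Fintype V] in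
lemma elementary_compl (ends : E → Sym2 V) (S : Set V) (h : Elementary ends S) :
    Elementary ends Sᶜ := by
  obtain ⟨h1, h2, h3, h4⟩ := h
  exact ⟨h2, by simpa using h1, h4, by simpa [compl_compl] using h3⟩

lemma finsum_smul_add (S : Set V) (a b : ℝ) (φ ψ : V → ℝ) :
    ∑ᶠ v ∈ S, (a • φ + b • ψ) v = a * (∑ᶠ v ∈ S, φ v) + b * (∑ᶠ v ∈ S, ψ v) := by
  simp [finsum_eq, Finset.sum_add_distrib, Finset.mul_sum]

lemma continuous_ell (ends : E → Sym2 V) (S : Set V) (d : ℤ) :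
    Continuous (fun φ : V → ℝ => ell ends S d φ) := by
  simp only [ell, finsum_eq]
  exact (continuous_const.sub (continuous_finset_sum _ fun v _ => continuous_apply v)).add
    continuous_const

end Helpers

/-- For a connected multigraph `Γ` and a nondegenerate `φ0 ∈ V(Γ)`,
the stability polytope containing `φ0` (the connected component of the complement of
the union of the stability hyperplanes containing `φ0`) equals
`{φ ∈ V(Γ) : ℓ(S,d)(φ) > 0 for every elementary S and d ∈ ℤ with ℓ(S,d)(φ0) > 0}`. -/
theorem statement7 (V E : Type) [Fintype V] (ends : E → Sym2 V)
    (hconn : GraphConnected ends) (g : ℤ)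
    (φ0 : V → ℝ) (hφ0 : (∑ v, φ0 v) = (g : ℝ) - 1)
    (hnd : Nondegenerate ends φ0) :
    connectedComponentIn (OmegaSet ends ((g : ℝ))) φ0 =
      {φ : V → ℝ | (∑ v, φ v) = (g : ℝ) - 1 ∧
        ∀ (S : Set V) (d : ℤ), Elementary ends S →
          0 < ell ends S d φ0 → 0 < ell ends S d φ} := by
  set Ω := OmegaSet ends ((g : ℝ)) with hΩdef
  have hφ0Ω : φ0 ∈ Ω := ⟨hφ0, hnd⟩
  apply Set.Subset.antisymm
  · -- component ⊆ RHS
    intro φ hφ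
    have hφΩ : φ ∈ Ω := connectedComponentIn_subset _ _ hφ
    refine ⟨hφΩ.1, ?_⟩
    intro S d hS hpos
    by_contra hle
    push_neg at hle
    have hne : ell ends S d φ ≠ 0 := hφΩ.2 S hS d
    have hlt : ell ends S d φ < 0 := lt_of_le_of_ne hle hne
    have hpre : IsPreconnected (connectedComponentIn Ω φ0) :=
      isPreconnected_connectedComponentIn
    have hmem0 : φ0 ∈ connectedComponentIn Ω φ0 := mem_connectedComponentIn hφ0Ω
    have hcont : ContinuousOn (fun ψ : V → ℝ => ell ends S d ψ)
        (connectedComponentIn Ω φ0) := (continuous_ell ends S d).continuousOn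
    have h0 : (0 : ℝ) ∈ Set.Icc (ell ends S d φ) (ell ends S d φ0) :=
      ⟨le_of_lt hlt, le_of_lt hpos⟩
    obtain ⟨ψ, hψmem, hψ0⟩ := hpre.intermediate_value hφ hmem0 hcont h0
    have hψΩ : ψ ∈ Ω := connectedComponentIn_subset _ _ hψmem
    exact hψΩ.2 S hS d hψ0
  · -- RHS ⊆ component
    set Q : Set (V → ℝ) := {φ : V → ℝ | (∑ v, φ v) = (g : ℝ) - 1 ∧
        ∀ (S : Set V) (d : ℤ), Elementary ends S →
          0 < ell ends S d φ0 → 0 < ell ends S d φ} with hQdef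
    have hφ0Q : φ0 ∈ Q := ⟨hφ0, fun S d _ h => h⟩
    have hQΩ : Q ⊆ Ω := by
      rintro φ ⟨hsum, hall⟩
      refine ⟨hsum, ?_⟩
      intro S hS d hzero
      -- notation
      set x0 : ℝ := ∑ᶠ v ∈ S, φ0 v with hx0
      set x : ℝ := ∑ᶠ v ∈ S, φ v with hx
      set c : ℝ := (cut ends S : ℝ) with hc
      have hzero' : (d : ℝ) - x + c / 2 = 0 := hzero
      set m : ℤ := ⌈x0 - c / 2⌉ with hm
      set m' : ℤ := ⌈((g : ℝ) - 1 - x0) - c / 2⌉ with hm'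
      -- ell ends S m φ0 > 0
      have hSm0 : ell ends S m φ0 = (m : ℝ) - (x0 - c / 2) := by
        simp only [ell, ← hx0, ← hc]; ring
      have hne1 : ell ends S m φ0 ≠ 0 := hnd S hS m
      have hpos1 : 0 < ell ends S m φ0 := by
        rcases lt_or_gt_of_ne hne1 with h | h
        · exfalso
          have := Int.le_ceil (x0 - c / 2)
          rw [hSm0] at h; rw [← hm] at this; linarith
        · exact h
      have h2 : 0 < ell ends S m φ := hall S m hS hpos1
      have h2' : x - c / 2 < (m : ℝ) := by
        have : ell ends S m φ = (m : ℝ) - x + c / 2 := rfl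
        rw [this] at h2; linarith
      -- complement
      have hellc0 : ∀ (d' : ℤ) (ψ : V → ℝ),
          ell ends Sᶜ d' ψ = (d' : ℝ) - ((∑ v, ψ v) - (∑ᶠ v ∈ S, ψ v)) + c / 2 := by
        intro d' ψ
        simp only [ell, sum_compl, cut_compl, ← hc]
      have hSm0' : ell ends Sᶜ m' φ0 = (m' : ℝ) - (((g : ℝ) - 1 - x0) - c / 2) := by
        rw [hellc0, hφ0, ← hx0]; ring
      have hScomp : Elementary ends Sᶜ := elementary_compl ends S hS
      have hne2 : ell ends Sᶜ m' φ0 ≠ 0 := hnd Sᶜ hScomp m'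
      have hpos2 : 0 < ell ends Sᶜ m' φ0 := by
        rcases lt_or_gt_of_ne hne2 with h | h
        · exfalso
          have := Int.le_ceil (((g : ℝ) - 1 - x0) - c / 2)
          rw [hSm0'] at h; rw [← hm'] at this; linarith
        · exact h
      have h4 : 0 < ell ends Sᶜ m' φ := hall Sᶜ m' hScomp hpos2
      have h4' : ((g : ℝ) - 1 - x) - c / 2 < (m' : ℝ) := by
        rw [hellc0, hsum, ← hx] at h4; linarith
      -- ceiling upper bounds
      have hub1 : (m : ℝ) < (x0 - c / 2) + 1 := Int.ceil_lt_add_one _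
      have hub2 : (m' : ℝ) < (((g : ℝ) - 1 - x0) - c / 2) + 1 := Int.ceil_lt_add_one _
      -- strict lower bounds from nondegeneracy
      have hlb1 : x0 - c / 2 < (m : ℝ) := by
        rw [hSm0] at hne1
        have := Int.le_ceil (x0 - c / 2); rw [← hm] at this
        rcases lt_or_eq_of_le this with h | h
        · exact h
        · exfalso; apply hne1; linarith
      have hlb2 : ((g : ℝ) - 1 - x0) - c / 2 < (m' : ℝ) := by
        rw [hSm0'] at hne2
        have := Int.le_ceil (((g : ℝ) - 1 - x0) - c / 2); rw [← hm'] at this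
        rcases lt_or_eq_of_le this with h | h
        · exact h
        · exfalso; apply hne2; linarith
      -- translate to integers
      have hd_lt : ((d : ℝ)) < (m : ℝ) := by linarith
      have hd_lt' : (d : ℤ) < m := by exact_mod_cast hd_lt
      have hg1 : ((g - 1 - (cut ends S : ℤ) - d : ℤ) : ℝ) < (m' : ℝ) := by
        push_cast; rw [← hc]; linarith
      have hg1' : (g - 1 - (cut ends S : ℤ) - d : ℤ) < m' := by exact_mod_cast hg1
      have hg2 : ((g - 1 - (cut ends S : ℤ) : ℤ) : ℝ) < ((m + m' : ℤ) : ℝ) := by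
        push_cast; rw [← hc]; linarith
      have hg2' : (g - 1 - (cut ends S : ℤ) : ℤ) < m + m' := by exact_mod_cast hg2
      have hg3 : ((m + m' : ℤ) : ℝ) < ((g + 1 - (cut ends S : ℤ) : ℤ) : ℝ) := by
        push_cast; rw [← hc]; linarith
      have hg3' : (m + m' : ℤ) < g + 1 - (cut ends S : ℤ) := by exact_mod_cast hg3
      omega
    have hconv : Convex ℝ Q := by
      rintro φ hφ ψ hψ a b ha hb hab
      obtain ⟨hφs, hφa⟩ := hφ
      obtain ⟨hψs, hψa⟩ := hψ
      constructor
      · have : ∑ v, (a • φ + b • ψ) v = a * (∑ v, φ v) + b * (∑ v, ψ v) := by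
          simp [Finset.sum_add_distrib, Finset.mul_sum]
        rw [this, hφs, hψs]; linear_combination ((g : ℝ) - 1) * hab
      · intro S d hS hpos
        have h1 := hφa S d hS hpos
        have h2 := hψa S d hS hpos
        have hcomb : ell ends S d (a • φ + b • ψ)
            = a * ell ends S d φ + b * ell ends S d ψ := by
          simp only [ell, finsum_smul_add]
          linear_combination (-(d : ℝ) - (cut ends S : ℝ) / 2) * hab
        rw [hcomb]
        rcases eq_or_lt_of_le ha with h | h
        · have hb1 : b = 1 := by linarith
          rw [← h, hb1]; simpa using h2
        · have := mul_pos h h1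
          have := mul_nonneg hb (le_of_lt h2)
          linarith
    exact hconv.isPreconnected.subset_connectedComponentIn hφ0Q hQΩ


end ThetaPaper
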